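/- Let R(G₂) = ℤ[ω₁,ω₂,y₃]/⟨g₂, r₃, r₆⟩, where g₂ = 3ω₁² − 3ω₁ω₂ + ω₂², r₃ = 2y₃ − ω₁³, r₆ = y₃². Then R(G₂) is generated, as a module over the subring generated by the images of ω₁ and ω₂, by the images of 1 and y₃. -/
import Mathlib


open MvPolynomial

noncomputable section

/-- The polynomial ring ℤ[ω₁,ω₂,y₃]: ω₁ = X 0, ω₂ = X 1, y₃ = X 2. -/
abbrev G2Poly : Type := MvPolynomial (Fin 3) ℤ

/-- The ideal ⟨g₂, r₃, r₆⟩. -/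
def G2rels : Ideal G2Poly :=
  Ideal.span
    ({ 3 * X 0 ^ 2 - 3 * X 0 * X 1 + X 1 ^ 2,   -- g₂
       2 * X 2 - X 0 ^ 3,                        -- r₃
       X 2 ^ 2 } :                               -- r₆
      Set G2Poly)

/-- R(G₂) = ℤ[ω₁,ω₂,y₃]/⟨g₂, r₃, r₆⟩. -/
abbrev RG2 : Type := G2Poly ⧸ G2rels

lemma y3_sq_zero :
    Ideal.Quotient.mk G2rels (X 2) * Ideal.Quotient.mk G2rels (X 2) = 0 := by
  rw [← map_mul, Ideal.Quotient.eq_zero_iff_mem, ← sq]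
  exact Ideal.subset_span (by simp [Set.mem_insert_iff])

set_option synthInstance.maxHeartbeats 1000000 in
set_option maxHeartbeats 2000000 in
/-- Proposition 1 for G = G₂: R(G₂) is generated, as a module over the subring
    generated by the images of ω₁ and ω₂, by the images of 1 and y₃. -/
theorem RG2_spanned_by_one_y3 :
    Submodule.span
      (Algebra.adjoin ℤ
        ({Ideal.Quotient.mk G2rels (X 0), Ideal.Quotient.mk G2rels (X 1)} : Set RG2))
      ({1, Ideal.Quotient.mk G2rels (X 2)} : Set RG2) = ⊤ := by
  set q := Ideal.Quotient.mk G2rels with hq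
  set A := Algebra.adjoin ℤ ({q (X 0), q (X 1)} : Set RG2) with hA
  set M := Submodule.span A ({1, q (X 2)} : Set RG2) with hM
  have h1 : (1 : RG2) ∈ M := Submodule.subset_span (Set.mem_insert _ _)
  have hy : q (X 2) ∈ M := Submodule.subset_span (Set.mem_insert_of_mem _ rfl)
  have hXA : ∀ i : Fin 3, i ≠ 2 → q (X i) ∈ A := by
    intro i hi
    fin_cases i
    · exact Algebra.subset_adjoin (Set.mem_insert _ _)
    · exact Algebra.subset_adjoin (Set.mem_insert_of_mem _ rfl)
    · exact absurd rfl hi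
  rw [eq_top_iff]
  rintro x -
  obtain ⟨p, rfl⟩ := Ideal.Quotient.mk_surjective x
  induction p using MvPolynomial.induction_on with
  | C a =>
      have : q (C a) = a • (1 : RG2) := by
        simp [q, Algebra.smul_def, algebraMap_eq]
      rw [this]
      exact M.toAddSubgroup.zsmul_mem h1 a
  | add p r hp hr =>
      rw [map_add]; exact M.add_mem hp hr
  | mul_X p n hp =>
      rw [map_mul]
      by_cases hn : n = 2
      · subst hn
        obtain ⟨c, d, hcd⟩ := Submodule.mem_span_pair.mp (by rwa [hM] at hp)
        rw [← hcd, add_mul, smul_mul_assoc, smul_mul_assoc, one_mul, y3_sq_zero,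
          smul_zero, add_zero]
        exact M.smul_mem c hy
      · have : q p * q (X n) = (⟨q (X n), hXA n hn⟩ : A) • q p := by
          rw [Subalgebra.smul_def, smul_eq_mul]; exact mul_comm _ _
        rw [this]
        exact M.smul_mem _ hp
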